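/- arXiv:1810.11669 — 2 statements merged into one kernel-verified Lean document; each statement's English description precedes it below -/
import Mathlib

section
/- Let G be a strongly connected digraph on n vertices other than the directed cycle, let (v_i, v_j) ∈ E(G), and let w be a new vertex. Form the digraph G^w by deleting the arc (v_i, v_j) and adding arcs (v_i, w) and (w, v_j) (subdividing the arc). Then for all α ∈ [0,1), λ_α(G) ≥ λ_α(G^w). -/
open scoped Classical
open Matrix

/-- Spectral radius: largest modulus of (complex) eigenvalues, i.e. roots of the
characteristic polynomial of the complexified matrix. -/
noncomputable def specRad {m : Type*} [Fintype m] [DecidableEq m] (M : Matrix m m ℝ) : ℝ :=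
  sSup {r : ℝ | ∃ μ : ℂ, (M.map Complex.ofReal).charpoly.IsRoot μ ∧ r = ‖μ‖}

/-- Irreducibility of a matrix: the associated digraph is strongly connected. -/
def Irred {n : ℕ} (M : Matrix (Fin n) (Fin n) ℝ) : Prop :=
  ∀ i j : Fin n, Relation.ReflTransGen (fun a b => M a b ≠ 0) i j

/-- Outdegree of a vertex in a digraph on `Fin n`. -/
noncomputable def outdeg {n : ℕ} (G : Fin n → Fin n → Prop) (i : Fin n) : ℕ :=
  (Finset.univ.filter (fun j => G i j)).card

/-- Indegree of a vertex. -/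
noncomputable def indeg {n : ℕ} (G : Fin n → Fin n → Prop) (i : Fin n) : ℕ :=
  (Finset.univ.filter (fun j => G j i)).card

/-- The matrix `A_α(G) = α D(G) + (1-α) A(G)`. -/
noncomputable def Aalpha {n : ℕ} (α : ℝ) (G : Fin n → Fin n → Prop) :
    Matrix (Fin n) (Fin n) ℝ :=
  α • Matrix.diagonal (fun i => (outdeg G i : ℝ)) +
    (1 - α) • (Matrix.of fun i j => if G i j then (1 : ℝ) else 0)

/-- The `A_α` spectral radius of a digraph. -/
noncomputable def lamAlpha {n : ℕ} (α : ℝ) (G : Fin n → Fin n → Prop) : ℝ :=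
  specRad (Aalpha α G)

/-- Strong connectivity of a digraph. -/
def SConn {n : ℕ} (G : Fin n → Fin n → Prop) : Prop :=
  ∀ u v : Fin n, Relation.ReflTransGen G u v

/-- Isomorphism of digraphs on `Fin n`. -/
def DIso {n : ℕ} (G H : Fin n → Fin n → Prop) : Prop :=
  ∃ e : Equiv.Perm (Fin n), ∀ u v, G u v ↔ H (e u) (e v)

/-- The directed cycle on `Fin n`. -/
def dirCycle (n : ℕ) : Fin n → Fin n → Prop :=
  fun i j => j.val = (i.val + 1) % n


/-- Deleting a set of vertices from a digraph. -/
def delVerts {n : ℕ} (G : Fin n → Fin n → Prop) (S : Finset (Fin n)) :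
    Fin n → Fin n → Prop :=
  fun a b => G a b ∧ a ∉ S ∧ b ∉ S

/-- The digraph obtained by deleting the vertices of `S` is strongly connected. -/
def SConnAvoid {n : ℕ} (G : Fin n → Fin n → Prop) (S : Finset (Fin n)) : Prop :=
  ∀ u v : Fin n, u ∉ S → v ∉ S → Relation.ReflTransGen (delVerts G S) u v

/-- The vertex connectivity of `G` equals `k`. -/
def vertexConnIs {n : ℕ} (G : Fin n → Fin n → Prop) (k : ℕ) : Prop :=
  (∃ S : Finset (Fin n), S.card = k ∧ ¬ SConnAvoid G S) ∧
    ∀ S : Finset (Fin n), ¬ SConnAvoid G S → k ≤ S.card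

/-- Deleting a set of arcs from a digraph. -/
def delArcs {n : ℕ} (G : Fin n → Fin n → Prop) (S : Finset (Fin n × Fin n)) :
    Fin n → Fin n → Prop :=
  fun a b => G a b ∧ (a, b) ∉ S

/-- The arc connectivity of `G` equals `k`. -/
def arcConnIs {n : ℕ} (G : Fin n → Fin n → Prop) (k : ℕ) : Prop :=
  (∃ S : Finset (Fin n × Fin n), S.card = k ∧ ¬ SConn (delArcs G S)) ∧
    ∀ S : Finset (Fin n × Fin n), ¬ SConn (delArcs G S) → k ≤ S.card

/-- `G` contains a directed cycle of length `g`. -/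
def hasCycleLen {n : ℕ} (G : Fin n → Fin n → Prop) (g : ℕ) : Prop :=
  ∃ c : Fin g → Fin n, Function.Injective c ∧
    ∀ i : Fin g, G (c i) (c ⟨(i.val + 1) % g, Nat.mod_lt _ i.pos⟩)

/-- The girth of `G` equals `g`. -/
def girthIs {n : ℕ} (G : Fin n → Fin n → Prop) (g : ℕ) : Prop :=
  hasCycleLen G g ∧ ∀ m, 0 < m → m < g → ¬ hasCycleLen G m

/-- The clique number of `G` equals `d`. -/
def cliqueNumIs {n : ℕ} (G : Fin n → Fin n → Prop) (d : ℕ) : Prop :=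
  (∃ S : Finset (Fin n), S.card = d ∧ ∀ u ∈ S, ∀ v ∈ S, u ≠ v → G u v ∧ G v u) ∧
    ∀ S : Finset (Fin n), (∀ u ∈ S, ∀ v ∈ S, u ≠ v → G u v ∧ G v u) → S.card ≤ d

/-- The digraph `C_{n,g}`: the directed cycle `v_1 … v_g v_1` (indices `0,…,g-1`)
together with the directed path `v_g v_{g+1} … v_n v_1`. -/
def Cng (n g : ℕ) : Fin n → Fin n → Prop := fun i j =>
  j.val = i.val + 1 ∨ (i.val = g - 1 ∧ j.val = 0) ∨ (i.val = n - 1 ∧ j.val = 0)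

/-- `C'_{n,g} = C_{n,g} - {(v_n, v_1)} + {(v_n, v_g)}`. -/
def Cng' (n g : ℕ) : Fin n → Fin n → Prop := fun i j =>
  j.val = i.val + 1 ∨ (i.val = g - 1 ∧ j.val = 0) ∨ (i.val = n - 1 ∧ j.val = g - 1)

/-- The digraph `B_{n,d}`: a complete digraph on the `d` vertices
`{0} ∪ {n-d+1, …, n-1}` together with the directed path `v_1 v_2 … v_{n-d+2}`
(indices `0, 1, …, n-d+1`). -/
def Bnd (n d : ℕ) : Fin n → Fin n → Prop := fun i j =>
  (j.val = i.val + 1 ∧ j.val ≤ n - d + 1) ∨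
    (i ≠ j ∧ (i.val = 0 ∨ n - d + 1 ≤ i.val) ∧ (j.val = 0 ∨ n - d + 1 ≤ j.val))

/-- `B'_{n,d} = B_{n,d} - {(v_{n-d+1}, v_{n-d+2})} + {(v_{n-d+1}, v_1)}`. -/
def Bnd' (n d : ℕ) : Fin n → Fin n → Prop := fun i j =>
  (j.val = i.val + 1 ∧ j.val ≤ n - d) ∨ (i.val = n - d ∧ j.val = 0) ∨
    (i ≠ j ∧ (i.val = 0 ∨ n - d + 1 ≤ i.val) ∧ (j.val = 0 ∨ n - d + 1 ≤ j.val))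

/-- The digraph `K(n,k,m)`: parts `K_m` (indices `< m`), `K_k` (indices in `[m, m+k)`),
`K_{n-k-m}` (indices `≥ m+k`); all parts complete, `K_k` joined both ways to the others,
and all one-way arcs from `K_m` to `K_{n-k-m}`. -/
def Knkm (n k m : ℕ) : Fin n → Fin n → Prop := fun i j =>
  i ≠ j ∧ ¬(m + k ≤ i.val ∧ j.val < m)

lemma charpoly_eval' {m R : Type*} [Fintype m] [DecidableEq m] [CommRing R]
    (M : Matrix m m R) (r : R) :
    M.charpoly.eval r = (r • (1 : Matrix m m R) - M).det := by
  rw [Matrix.charpoly, ← Polynomial.coe_evalRingHom, RingHom.map_det]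
  congr 1
  ext i j
  by_cases h : i = j <;>
    simp [Matrix.charmatrix_apply, Matrix.one_apply, h, Matrix.diagonal_apply]

lemma root_exists_eigvec {m : Type*} [Fintype m] [DecidableEq m]
    (M : Matrix m m ℂ) (μ : ℂ) (h : M.charpoly.IsRoot μ) :
    ∃ z : m → ℂ, z ≠ 0 ∧ M.mulVec z = μ • z := by
  have hdet : (μ • (1 : Matrix m m ℂ) - M).det = 0 := by
    rw [← charpoly_eval' M μ]; exact h
  obtain ⟨z, hz, hz2⟩ := (Matrix.exists_mulVec_eq_zero_iff).2 hdet
  refine ⟨z, hz, ?_⟩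
  rw [Matrix.sub_mulVec, sub_eq_zero] at hz2
  rw [← hz2, Matrix.smul_mulVec, Matrix.one_mulVec]

/-- the set of moduli of roots is bounded above -/
lemma specRad_bddAbove {m : Type*} [Fintype m] [DecidableEq m] (M : Matrix m m ℝ) :
    BddAbove {r : ℝ | ∃ μ : ℂ, (M.map Complex.ofReal).charpoly.IsRoot μ ∧ r = ‖μ‖} := by
  set p := (M.map Complex.ofReal).charpoly with hp
  have hp0 : p ≠ 0 := (Matrix.charpoly_monic _).ne_zero
  have hfin : {r : ℝ | ∃ μ : ℂ, p.IsRoot μ ∧ r = ‖μ‖}.Finite := by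
    have : {r : ℝ | ∃ μ : ℂ, p.IsRoot μ ∧ r = ‖μ‖}
        ⊆ (fun μ : ℂ => ‖μ‖) '' {μ | p.IsRoot μ} := by
      rintro r ⟨μ, h1, rfl⟩; exact ⟨μ, h1, rfl⟩
    refine Set.Finite.subset (Set.Finite.image _ ?_) this
    refine Set.Finite.subset p.roots.toFinset.finite_toSet ?_
    intro μ hμ
    have : μ ∈ p.roots := by rw [Polynomial.mem_roots hp0]; exact hμ
    simpa using this
  exact hfin.bddAbove

/-- if r is a real eigenvalue with some (real) eigenvector, and r ≥ 0, then r ≤ specRad M -/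
lemma le_specRad_of_eigvec {m : Type*} [Fintype m] [DecidableEq m]
    (M : Matrix m m ℝ) (r : ℝ) (hr : 0 ≤ r) (x : m → ℝ) (hx : x ≠ 0)
    (hMx : M.mulVec x = r • x) : r ≤ specRad M := by
  apply le_csSup (specRad_bddAbove M)
  refine ⟨(r : ℂ), ?_, by simp [Complex.norm_real, Real.norm_eq_abs, abs_of_nonneg hr]⟩
  have hdet : ((r : ℂ) • (1 : Matrix m m ℂ) - M.map Complex.ofReal).det = 0 := by
    rw [← Matrix.exists_mulVec_eq_zero_iff]
    refine ⟨fun a => (x a : ℂ), ?_, ?_⟩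
    · intro h0
      apply hx
      ext a
      have := congrFun h0 a
      simpa using this
    · rw [Matrix.sub_mulVec, sub_eq_zero, Matrix.smul_mulVec, Matrix.one_mulVec]
      ext a
      have h5 := congrFun hMx a
      simp only [Matrix.mulVec, dotProduct, Pi.smul_apply, smul_eq_mul,
        Matrix.map_apply] at h5 ⊢
      rw [← Complex.ofReal_mul, ← h5]
      push_cast
      rfl
  rw [Polynomial.IsRoot, charpoly_eval' _ ((r:ℝ) : ℂ)]
  exact hdet

/-- Upper bound: positive vector y with M y ≤ r y pointwise gives specRad ≤ r -/
lemma specRad_le_of_subinvariant {m : Type*} [Fintype m] [DecidableEq m] [Nonempty m]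
    (M : Matrix m m ℝ) (hM : ∀ a b, 0 ≤ M a b) (y : m → ℝ) (hy : ∀ a, 0 < y a)
    (r : ℝ) (hr : ∀ a, M.mulVec y a ≤ r * y a) : specRad M ≤ r := by
  have hr0 : 0 ≤ r := by
    obtain ⟨a⟩ := ‹Nonempty m›
    have h1 : 0 ≤ M.mulVec y a :=
      Finset.sum_nonneg fun b _ => mul_nonneg (hM a b) (hy b).le
    nlinarith [hr a, hy a]
  apply Real.sSup_le _ hr0
  rintro s ⟨μ, hμ, rfl⟩
  obtain ⟨z, hz, hMz⟩ := root_exists_eigvec _ μ hμ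
  -- pick k maximizing |z k| / y k
  obtain ⟨k, -, hk⟩ := Finset.exists_max_image Finset.univ
    (fun a => ‖z a‖ / y a) ⟨Classical.arbitrary m, Finset.mem_univ _⟩
  have hzk : 0 < ‖z k‖ := by
    obtain ⟨l, hl⟩ : ∃ l, z l ≠ 0 := by
      by_contra h
      push_neg at h
      exact hz (funext fun a => h a)
    have h1 : 0 < ‖z l‖ / y l :=
      div_pos (by simpa using hl) (hy l)
    have := hk l (Finset.mem_univ l)
    have h2 : 0 < ‖z k‖ / y k := lt_of_lt_of_le h1 this
    by_contra h3
    push_neg at h3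
    have : ‖z k‖ = 0 := le_antisymm h3 (norm_nonneg _)
    rw [this, zero_div] at h2
    exact lt_irrefl 0 h2
  have key : ‖μ‖ * ‖z k‖ ≤ r * ‖z k‖ := by
    have e1 : ‖μ‖ * ‖z k‖ = ‖(M.map Complex.ofReal).mulVec z k‖ := by
      rw [hMz]; simp
    rw [e1]
    have e2 : ‖(M.map Complex.ofReal).mulVec z k‖
        ≤ ∑ b, M k b * ‖z b‖ := by
      simp only [Matrix.mulVec, dotProduct]
      refine le_trans (norm_sum_le _ _) (le_of_eq ?_)
      refine Finset.sum_congr rfl fun b _ => ?_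
      rw [norm_mul]
      simp [Matrix.map_apply, Complex.norm_real, Real.norm_eq_abs, abs_of_nonneg (hM k b)]
    refine le_trans e2 ?_
    have e3 : ∀ b, ‖z b‖ ≤ (‖z k‖ / y k) * y b := by
      intro b
      have h := hk b (Finset.mem_univ b)
      rw [div_le_div_iff₀ (hy b) (hy k)] at h
      rw [div_mul_eq_mul_div, le_div_iff₀ (hy k)]
      exact h
    calc ∑ b, M k b * ‖z b‖
        ≤ ∑ b, M k b * ((‖z k‖ / y k) * y b) :=
          Finset.sum_le_sum fun b _ => mul_le_mul_of_nonneg_left (e3 b) (hM k b)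
      _ = (‖z k‖ / y k) * M.mulVec y k := by
          simp only [Matrix.mulVec, dotProduct]
          rw [Finset.mul_sum]
          exact Finset.sum_congr rfl fun b _ => by ring
      _ ≤ (‖z k‖ / y k) * (r * y k) := by
          exact mul_le_mul_of_nonneg_left (hr k) (div_nonneg hzk.le (hy k).le)
      _ = r * (‖z k‖ / y k * y k) := by ring
      _ = r * ‖z k‖ := by
          rw [div_mul_cancel₀]
          exact (hy k).ne'
  exact le_of_mul_le_mul_right key hzk

variable {m : Type*} [Fintype m] [DecidableEq m]

lemma mul_nn {M N : Matrix m m ℝ} (hM : ∀ a b, 0 ≤ M a b) (hN : ∀ a b, 0 ≤ N a b) :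
    ∀ a b, 0 ≤ (M * N) a b := fun a b => by
  rw [Matrix.mul_apply]
  exact Finset.sum_nonneg fun k _ => mul_nonneg (hM a k) (hN k b)

lemma pow_nn {M : Matrix m m ℝ} (hM : ∀ a b, 0 ≤ M a b) (L : ℕ) :
    ∀ a b, 0 ≤ (M ^ L) a b := by
  induction L with
  | zero => intro a b; simp [Matrix.one_apply]; positivity
  | succ L ih => rw [pow_succ]; exact mul_nn ih hM

lemma one_add_nn {M : Matrix m m ℝ} (hM : ∀ a b, 0 ≤ M a b) :
    ∀ a b, 0 ≤ (1 + M) a b := fun a b => by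
  rw [Matrix.add_apply]
  have : (0:ℝ) ≤ (1 : Matrix m m ℝ) a b := by
    by_cases h : a = b <;> simp [Matrix.one_apply, h]
  linarith [hM a b]

lemma diag_one_le {M : Matrix m m ℝ} (hM : ∀ a b, 0 ≤ M a b) (P : ℕ) (j : m) :
    1 ≤ ((1 + M) ^ P) j j := by
  induction P with
  | zero => simp
  | succ P ih =>
      rw [pow_succ, Matrix.mul_apply]
      have h1 : ((1 + M) ^ P) j j * (1 + M) j j ≤ ∑ k, ((1 + M) ^ P) j k * (1 + M) k j :=
        Finset.single_le_sum (f := fun k => ((1 + M) ^ P) j k * (1 + M) k j)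
          (fun k _ => mul_nonneg (pow_nn (one_add_nn hM) P j k) (one_add_nn hM k j))
          (Finset.mem_univ j)
      have h2 : (1:ℝ) ≤ (1 + M) j j := by
        rw [Matrix.add_apply]
        simp only [Matrix.one_apply_eq]
        linarith [hM j j]
      nlinarith
  
lemma pow_le_one_add_pow {M : Matrix m m ℝ} (hM : ∀ a b, 0 ≤ M a b) (L : ℕ) :
    ∀ a b, (M ^ L) a b ≤ ((1 + M) ^ L) a b := by
  induction L with
  | zero => intro a b; simp
  | succ L ih =>
      intro a b
      rw [pow_succ, pow_succ, Matrix.mul_apply, Matrix.mul_apply]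
      refine Finset.sum_le_sum fun k _ => ?_
      refine mul_le_mul (ih a k) ?_ (hM k b) (pow_nn (one_add_nn hM) L a k)
      rw [Matrix.add_apply]
      have : (0:ℝ) ≤ (1 : Matrix m m ℝ) k b := by
        by_cases h : k = b <;> simp [Matrix.one_apply, h]
      linarith

lemma walk_pow_pos {M : Matrix m m ℝ} (hM : ∀ a b, 0 ≤ M a b) {i j : m}
    (h : Relation.ReflTransGen (fun a b => 0 < M a b) i j) :
    ∃ L, 0 < (M ^ L) i j := by
  induction h with
  | refl => exact ⟨0, by simp⟩
  | @tail b c hib hbc ih =>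
      obtain ⟨L, hL⟩ := ih
      refine ⟨L + 1, ?_⟩
      rw [pow_succ, Matrix.mul_apply]
      refine Finset.sum_pos' (fun k _ => mul_nonneg (pow_nn hM L i k) (hM k c)) ?_
      exact ⟨b, Finset.mem_univ b, mul_pos hL hbc⟩

lemma exists_pos_power {M : Matrix m m ℝ} [Nonempty m] (hM : ∀ a b, 0 ≤ M a b)
    (hirr : ∀ i j : m, Relation.ReflTransGen (fun a b => 0 < M a b) i j) :
    ∃ N : ℕ, ∀ i j : m, 0 < ((1 + M) ^ N : Matrix m m ℝ) i j := by
  have hL : ∀ p : m × m, ∃ L, 0 < (M ^ L) p.1 p.2 := fun p => walk_pow_pos hM (hirr p.1 p.2)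
  choose Lf hLf using hL
  refine ⟨Finset.univ.sup Lf, fun i j => ?_⟩
  set N := Finset.univ.sup Lf with hN
  have hLN : Lf (i, j) ≤ N := Finset.le_sup (Finset.mem_univ (i, j))
  obtain ⟨K, hK⟩ := Nat.exists_eq_add_of_le hLN
  rw [hK, pow_add, Matrix.mul_apply]
  refine Finset.sum_pos' (fun k _ => mul_nonneg (pow_nn (one_add_nn hM) _ i k)
    (pow_nn (one_add_nn hM) _ k j)) ⟨j, Finset.mem_univ j, ?_⟩
  have h1 : 0 < ((1 + M) ^ Lf (i, j)) i j :=
    lt_of_lt_of_le (hLf (i, j)) (pow_le_one_add_pow hM _ i j)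
  have h2 : (1:ℝ) ≤ ((1 + M) ^ K) j j := diag_one_le hM K j
  nlinarith

section PF
variable [Nonempty m]

lemma perron_exists (M : Matrix m m ℝ) (hM : ∀ a b, 0 ≤ M a b)
    (hirr : ∀ i j : m, Relation.ReflTransGen (fun a b => 0 < M a b) i j) :
    ∃ (r : ℝ) (x : m → ℝ), 0 ≤ r ∧ (∀ a, 0 < x a) ∧ M.mulVec x = r • x := by
  classical
  set T : ℝ := ∑ a : m, ∑ b : m, M a b with hT
  have hT0 : 0 ≤ T := Finset.sum_nonneg fun a _ => Finset.sum_nonneg fun b _ => hM a b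
  have hrow : ∀ a, ∑ b, M a b ≤ T := by
    intro a
    refine Finset.single_le_sum (f := fun a => ∑ b, M a b)
      (fun c _ => Finset.sum_nonneg fun b _ => hM c b) (Finset.mem_univ a)
  -- the feasible set
  set S : Set (ℝ × (m → ℝ)) :=
    {p | p.1 ∈ Set.Icc (0:ℝ) T ∧ (∀ a, 0 ≤ p.2 a) ∧ (∑ a, p.2 a) = 1 ∧
      ∀ a, p.1 * p.2 a ≤ M.mulVec p.2 a} with hS
  -- the generic bound : feasible ρ are ≤ T
  have hbound : ∀ (ρ : ℝ) (x : m → ℝ), (∀ a, 0 ≤ x a) → (∑ a, x a) = 1 →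
      (∀ a, ρ * x a ≤ M.mulVec x a) → ρ ≤ T := by
    intro ρ x hx hsum hcon
    obtain ⟨a, -, ha⟩ := Finset.exists_max_image Finset.univ x
      ⟨Classical.arbitrary m, Finset.mem_univ _⟩
    have hxa : 0 < x a := by
      by_contra h
      push_neg at h
      have h0 : x a = 0 := le_antisymm h (hx a)
      have : ∑ b, x b ≤ 0 := by
        refine le_trans (Finset.sum_le_sum fun b _ => (ha b (Finset.mem_univ b))) ?_
        simp [h0]
      rw [hsum] at this; linarith
    have h1 : ρ * x a ≤ M.mulVec x a := hcon a
    have h2 : M.mulVec x a ≤ (∑ b, M a b) * x a := by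
      rw [Matrix.mulVec, dotProduct, Finset.sum_mul]
      exact Finset.sum_le_sum fun b _ =>
        mul_le_mul_of_nonneg_left (ha b (Finset.mem_univ b)) (hM a b)
    have h3 : (∑ b, M a b) * x a ≤ T * x a :=
      mul_le_mul_of_nonneg_right (hrow a) hxa.le
    have := le_trans h1 (le_trans h2 h3)
    exact le_of_mul_le_mul_right (by linarith) hxa
  -- S is compact
  have hScl : IsClosed S := by
    have e : S = {p : ℝ × (m → ℝ) | p.1 ∈ Set.Icc 0 T} ∩
        ((⋂ a : m, {p : ℝ × (m → ℝ) | 0 ≤ p.2 a}) ∩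
        ({p : ℝ × (m → ℝ) | (∑ a, p.2 a) = 1} ∩
        (⋂ a : m, {p : ℝ × (m → ℝ) | p.1 * p.2 a ≤ M.mulVec p.2 a}))) := by
      ext p
      simp only [hS, Set.mem_setOf_eq, Set.mem_inter_iff, Set.mem_iInter]
    rw [e]
    refine IsClosed.inter (isClosed_Icc.preimage continuous_fst) (IsClosed.inter ?_ (IsClosed.inter ?_ ?_))
    · exact isClosed_iInter fun a =>
        isClosed_le continuous_const ((continuous_apply a).comp continuous_snd)
    · exact isClosed_eq (continuous_finset_sum _ fun a _ =>
        (continuous_apply a).comp continuous_snd) continuous_const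
    · refine isClosed_iInter fun a => ?_
      have e2 : {p : ℝ × (m → ℝ) | p.1 * p.2 a ≤ M.mulVec p.2 a}
          = {p : ℝ × (m → ℝ) | p.1 * p.2 a ≤ ∑ b, M a b * p.2 b} := rfl
      rw [e2]
      exact isClosed_le (continuous_fst.mul ((continuous_apply a).comp continuous_snd))
        (continuous_finset_sum _ fun b _ =>
          continuous_const.mul ((continuous_apply b).comp continuous_snd))
  have hSbd : Bornology.IsBounded S := by
    have hsub : S ⊆ (Set.Icc (0:ℝ) T) ×ˢ (Set.pi Set.univ fun _ : m => Set.Icc (0:ℝ) 1) := by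
      rintro ⟨ρ, x⟩ ⟨h1, h2, h3, -⟩
      refine ⟨h1, fun a _ => ⟨h2 a, ?_⟩⟩
      calc x a ≤ ∑ b, x b :=
            Finset.single_le_sum (f := x) (fun b _ => h2 b) (Finset.mem_univ a)
        _ = 1 := h3
    exact Bornology.IsBounded.subset
      ((Metric.isBounded_Icc _ _).prod
        (Bornology.IsBounded.pi fun _ => Metric.isBounded_Icc _ _)) hsub
  have hScomp : IsCompact S := Metric.isCompact_of_isClosed_isBounded hScl hSbd
  have hSne : S.Nonempty := by
    refine ⟨(0, fun _ => ((Fintype.card m : ℝ))⁻¹), ⟨le_refl 0, hT0⟩, ?_, ?_, ?_⟩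
    · intro a
      positivity
    · rw [Finset.sum_const, Finset.card_univ, nsmul_eq_mul]
      rw [mul_inv_cancel₀]
      exact_mod_cast Fintype.card_ne_zero
    · intro a
      simp only [zero_mul]
      exact Finset.sum_nonneg fun b _ => mul_nonneg (hM a b) (by positivity)
  obtain ⟨p, hpS, hpmax⟩ := hScomp.exists_isMaxOn hSne continuous_fst.continuousOn
  obtain ⟨⟨hr0, hrT⟩, hx0, hxsum, hcon⟩ := hpS
  set r : ℝ := p.1 with hrdef
  set x : m → ℝ := p.2 with hxdef
  obtain ⟨N, hN⟩ := exists_pos_power hM hirr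
  set P : Matrix m m ℝ := (1 + M) ^ N with hPdef
  have hPnn : ∀ a b, 0 ≤ P a b := fun a b => (hN a b).le
  have hcomm : M * P = P * M :=
    (((Commute.one_right M).add_right (Commute.refl M)).pow_right N).eq
  have hxex : ∃ b, 0 < x b := by
    by_contra h
    push_neg at h
    have h0 : ∀ b, x b = 0 := fun b => le_antisymm (h b) (hx0 b)
    rw [Finset.sum_congr rfl (fun b _ => h0 b)] at hxsum
    simp at hxsum
  have hy : ∀ a, 0 < P.mulVec x a := by
    intro a
    obtain ⟨b, hb⟩ := hxex
    rw [Matrix.mulVec, dotProduct]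
    exact Finset.sum_pos' (fun k _ => mul_nonneg (hPnn a k) (hx0 k))
      ⟨b, Finset.mem_univ b, mul_pos (hN a b) hb⟩
  set y : m → ℝ := P.mulVec x with hydef
  have hMxr : M.mulVec x = r • x := by
    by_contra hne
    set z : m → ℝ := M.mulVec x - r • x with hzdef
    have hznn : ∀ a, 0 ≤ z a := by
      intro a
      simp only [hzdef, Pi.sub_apply, Pi.smul_apply, smul_eq_mul, sub_nonneg]
      exact hcon a
    have hzex : ∃ b, 0 < z b := by
      by_contra h
      push_neg at h
      apply hne
      rw [← sub_eq_zero]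
      funext b
      exact le_antisymm (h b) (hznn b)
    have hPz : ∀ a, 0 < P.mulVec z a := by
      intro a
      obtain ⟨b, hb⟩ := hzex
      rw [Matrix.mulVec, dotProduct]
      exact Finset.sum_pos' (fun k _ => mul_nonneg (hPnn a k) (hznn k))
        ⟨b, Finset.mem_univ b, mul_pos (hN a b) hb⟩
    have key : P.mulVec z = M.mulVec y - r • y := by
      rw [hzdef, Matrix.mulVec_sub, Matrix.mulVec_smul, Matrix.mulVec_mulVec, ← hcomm,
        ← Matrix.mulVec_mulVec, hydef]
    have hstrict : ∀ a, r * y a < M.mulVec y a := by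
      intro a
      have := hPz a
      rw [key] at this
      simp only [Pi.sub_apply, Pi.smul_apply, smul_eq_mul, sub_pos] at this
      exact this
    obtain ⟨a0, -, ha0⟩ := Finset.exists_min_image Finset.univ
      (fun a => M.mulVec y a / y a) ⟨Classical.arbitrary m, Finset.mem_univ _⟩
    set r' : ℝ := M.mulVec y a0 / y a0 with hr'def
    have hrr' : r < r' := (lt_div_iff₀ (hy a0)).mpr (hstrict a0)
    have hr'le : ∀ a, r' * y a ≤ M.mulVec y a := by
      intro a
      have h1 : r' ≤ M.mulVec y a / y a := ha0 a (Finset.mem_univ a)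
      rw [le_div_iff₀ (hy a)] at h1
      exact h1
    set s : ℝ := ∑ a, y a with hsdef
    have hs : 0 < s := Finset.sum_pos (fun a _ => hy a) Finset.univ_nonempty
    set x' : m → ℝ := s⁻¹ • y with hx'def
    have hx'nn : ∀ a, 0 ≤ x' a := fun a => by
      simp only [hx'def, Pi.smul_apply, smul_eq_mul]
      exact mul_nonneg (inv_nonneg.mpr hs.le) (hy a).le
    have hx'sum : ∑ a, x' a = 1 := by
      simp only [hx'def, Pi.smul_apply, smul_eq_mul]
      rw [← Finset.mul_sum, ← hsdef, inv_mul_cancel₀ hs.ne']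
    have hx'con : ∀ a, r' * x' a ≤ M.mulVec x' a := by
      intro a
      rw [hx'def, Matrix.mulVec_smul]
      simp only [Pi.smul_apply, smul_eq_mul]
      have := hr'le a
      have hinv : (0:ℝ) ≤ s⁻¹ := by positivity
      nlinarith
    have hr'T : r' ≤ T := hbound r' x' hx'nn hx'sum hx'con
    have hmem : ((r', x') : ℝ × (m → ℝ)) ∈ S :=
      ⟨⟨le_trans hr0 hrr'.le, hr'T⟩, hx'nn, hx'sum, hx'con⟩
    have := hpmax hmem
    simp only [hrdef] at this
    exact absurd (lt_of_lt_of_le hrr' this) (lt_irrefl r)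
  refine ⟨r, y, hr0, hy, ?_⟩
  rw [hydef, Matrix.mulVec_mulVec, hcomm, ← Matrix.mulVec_mulVec, hMxr, Matrix.mulVec_smul]
end PF


section PF9aux
open Finset

lemma PF9_outdeg_sum {n : ℕ} (G : Fin n → Fin n → Prop) (u : Fin n) :
    ((outdeg G u : ℝ)) = ∑ v, (if G u v then (1:ℝ) else 0) := by
  classical
  rw [outdeg, Finset.sum_boole]

lemma PF9_Aalpha_nonneg {n : ℕ} (α : ℝ) (h0 : 0 ≤ α) (h1 : α ≤ 1)
    (G : Fin n → Fin n → Prop) : ∀ a b, 0 ≤ Aalpha α G a b := by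
  intro a b
  simp only [Aalpha, Matrix.add_apply, Matrix.smul_apply, Matrix.of_apply, smul_eq_mul,
    Matrix.diagonal_apply]
  have t1 : (0:ℝ) ≤ α * (if a = b then ((outdeg G a : ℝ)) else 0) := by
    by_cases h : a = b <;> simp [h] <;> positivity
  have t2 : (0:ℝ) ≤ (1 - α) * (if G a b then (1:ℝ) else 0) := by
    by_cases h : G a b <;> simp [h] <;> linarith
  linarith

lemma PF9_Aalpha_mulVec {n : ℕ} (α : ℝ) (G : Fin n → Fin n → Prop)
    (x : Fin n → ℝ) (u : Fin n) :
    (Aalpha α G).mulVec x u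
      = α * ((outdeg G u : ℝ)) * x u + (1 - α) * ∑ v, (if G u v then x v else 0) := by
  classical
  rw [Matrix.mulVec, dotProduct]
  simp only [Aalpha, Matrix.add_apply, Matrix.smul_apply, Matrix.of_apply, smul_eq_mul,
    Matrix.diagonal_apply]
  have e1 : ∀ v : Fin n,
      ((α * if u = v then ((outdeg G u : ℝ)) else 0)
        + (1 - α) * (if G u v then (1:ℝ) else 0)) * x v
      = α * (if u = v then ((outdeg G u : ℝ)) * x v else 0)
        + (1 - α) * (if G u v then x v else 0) := by
    intro v
    by_cases h1 : u = v
    · subst h1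
      by_cases h2 : G u u <;> simp [h2] <;> ring
    · by_cases h2 : G u v <;> simp [h1, h2] <;> ring
  rw [Finset.sum_congr rfl fun v _ => e1 v, Finset.sum_add_distrib, ← Finset.mul_sum,
    ← Finset.mul_sum]
  congr 1
  have e2 : ∑ v, (if u = v then ((outdeg G u : ℝ)) * x v else 0)
      = ((outdeg G u : ℝ)) * x u := by
    simp
  rw [e2]
  ring

end PF9aux


/-- subdividing an arc of a strongly connected digraph (other than the
directed cycle) does not increase the `A_α` spectral radius. -/
theorem stmt9 {n : ℕ} (α : ℝ) (hα0 : 0 ≤ α) (hα1 : α < 1)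
    (G : Fin n → Fin n → Prop) (hGs : ∀ i, ¬ G i i) (hSC : SConn G)
    (hnc : ¬ DIso G (dirCycle n))
    (i j : Fin n) (hij : G i j)
    (Gw : Fin (n + 1) → Fin (n + 1) → Prop)
    (hGw : ∀ a b, Gw a b ↔
      ((∃ u v : Fin n, a = Fin.castSucc u ∧ b = Fin.castSucc v ∧ G u v ∧
          ¬(u = i ∧ v = j)) ∨
        (a = Fin.castSucc i ∧ b = Fin.last n) ∨
        (a = Fin.last n ∧ b = Fin.castSucc j))) :
    lamAlpha α Gw ≤ lamAlpha α G := by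
  classical
  haveI : Nonempty (Fin n) := ⟨i⟩
  have h1α : (0:ℝ) < 1 - α := by linarith
  set A : Matrix (Fin n) (Fin n) ℝ := Aalpha α G with hA
  set B : Matrix (Fin (n+1)) (Fin (n+1)) ℝ := Aalpha α Gw with hB
  have hAnn : ∀ a b, 0 ≤ A a b := PF9_Aalpha_nonneg α hα0 hα1.le G
  have hBnn : ∀ a b, 0 ≤ B a b := PF9_Aalpha_nonneg α hα0 hα1.le Gw
  -- entries over arcs are positive
  have hpos : ∀ u v : Fin n, G u v → 0 < A u v := by
    intro u v huv
    simp only [hA, Aalpha, Matrix.add_apply, Matrix.smul_apply, Matrix.of_apply, smul_eq_mul,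
      Matrix.diagonal_apply, if_pos huv]
    have t1 : (0:ℝ) ≤ α * (if u = v then ((outdeg G u : ℝ)) else 0) := by
      by_cases h : u = v <;> simp [h] <;> positivity
    linarith
  have hirr : ∀ a b : Fin n, Relation.ReflTransGen (fun a b => 0 < A a b) a b := by
    intro a b
    exact Relation.ReflTransGen.mono (fun u v huv => hpos u v huv) a b (hSC a b)
  obtain ⟨r, x, hr0, hx, hAx⟩ := perron_exists A hAnn hirr
  -- every vertex has an out-neighbor
  have hdeg : ∀ u : Fin n, (1:ℝ) ≤ ((outdeg G u : ℝ)) := by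
    intro u
    have hex : ∃ v, G u v := by
      rcases (hSC u i).cases_head with h | ⟨c, huc, -⟩
      · exact ⟨j, h ▸ hij⟩
      · exact ⟨c, huc⟩
    obtain ⟨v, hv⟩ := hex
    have : 0 < outdeg G u := by
      rw [outdeg, Finset.card_pos]
      exact ⟨v, Finset.mem_filter.mpr ⟨Finset.mem_univ v, hv⟩⟩
    exact_mod_cast this
  -- r ≥ 1
  have hr1 : (1:ℝ) ≤ r := by
    obtain ⟨u0, -, hu0⟩ := Finset.exists_min_image Finset.univ x
      ⟨Classical.arbitrary (Fin n), Finset.mem_univ _⟩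
    have h1 : (Aalpha α G).mulVec x u0 = r * x u0 := by
      have := congrFun hAx u0
      simpa using this
    rw [PF9_Aalpha_mulVec] at h1
    have h2 : ((outdeg G u0 : ℝ)) * x u0 ≤ ∑ v, (if G u0 v then x v else 0) := by
      rw [PF9_outdeg_sum, Finset.sum_mul]
      refine Finset.sum_le_sum fun v _ => ?_
      by_cases h : G u0 v
      · simpa [h] using hu0 v (Finset.mem_univ v)
      · simp [h]
    have h3 : ((outdeg G u0 : ℝ)) * x u0 ≤ r * x u0 := by nlinarith
    have h4 : x u0 ≤ ((outdeg G u0 : ℝ)) * x u0 := by nlinarith [hdeg u0, hx u0]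
    nlinarith [hx u0]
  have hrα : 0 < r - α := by linarith
  -- the sub-invariant vector for B
  set c : ℝ := (1 - α) * x j / (r - α) with hc
  have hcpos : 0 < c := by
    have := hx j
    positivity
  have hcle : c ≤ x j := by
    rw [hc, div_le_iff₀ hrα]
    nlinarith [hx j]
  set y : Fin (n+1) → ℝ := Fin.snoc x c with hy
  have hypos : ∀ a, 0 < y a := by
    intro a
    refine Fin.lastCases ?_ ?_ a
    · simp [hy, hcpos]
    · intro u; simp [hy, hx u]
  -- characterization of Gw rows
  have hGw1 : ∀ u v : Fin n, Gw u.castSucc v.castSucc ↔ (G u v ∧ ¬(u = i ∧ v = j)) := by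
    intro u v
    rw [hGw]
    constructor
    · rintro (⟨u', v', h1, h2, h3, h4⟩ | ⟨-, h2⟩ | ⟨h1, -⟩)
      · rw [Fin.castSucc_inj] at h1 h2
        subst h1; subst h2; exact ⟨h3, h4⟩
      · exact absurd h2 (Fin.castSucc_lt_last v).ne
      · exact absurd h1 (Fin.castSucc_lt_last u).ne
    · rintro ⟨h1, h2⟩
      exact Or.inl ⟨u, v, rfl, rfl, h1, h2⟩
  have hGw2 : ∀ u : Fin n, Gw u.castSucc (Fin.last n) ↔ u = i := by
    intro u
    rw [hGw]
    constructor
    · rintro (⟨u', v', -, h2, -⟩ | ⟨h1, -⟩ | ⟨h1, -⟩)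
      · exact absurd h2.symm (Fin.castSucc_lt_last v').ne
      · rwa [Fin.castSucc_inj] at h1
      · exact absurd h1 (Fin.castSucc_lt_last u).ne
    · rintro rfl
      exact Or.inr (Or.inl ⟨rfl, rfl⟩)
  have hGw3 : ∀ v : Fin n, Gw (Fin.last n) v.castSucc ↔ v = j := by
    intro v
    rw [hGw]
    constructor
    · rintro (⟨u', v', h1, -⟩ | ⟨h1, -⟩ | ⟨-, h2⟩)
      · exact absurd h1.symm (Fin.castSucc_lt_last u').ne
      · exact absurd h1.symm (Fin.castSucc_lt_last i).ne
      · rwa [Fin.castSucc_inj] at h2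
    · rintro rfl
      exact Or.inr (Or.inr ⟨rfl, rfl⟩)
  have hGw4 : ¬ Gw (Fin.last n) (Fin.last n) := by
    rw [hGw]
    rintro (⟨u', v', h1, -⟩ | ⟨h1, -⟩ | ⟨-, h2⟩)
    · exact absurd h1.symm (Fin.castSucc_lt_last u').ne
    · exact absurd h1.symm (Fin.castSucc_lt_last i).ne
    · exact absurd h2.symm (Fin.castSucc_lt_last j).ne
  -- row sums of Gw through castSucc
  have hrow : ∀ (u : Fin n) (w : Fin (n+1) → ℝ),
      (∑ b, if Gw u.castSucc b then w b else 0)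
        = (∑ v, if G u v then w v.castSucc else 0)
          + (if u = i then w (Fin.last n) - w (Fin.castSucc j) else 0) := by
    intro u w
    rw [Fin.sum_univ_castSucc]
    by_cases hu : u = i
    · subst hu
      have e1 : ∀ v : Fin n, (if Gw u.castSucc v.castSucc then w v.castSucc else 0)
          = (if G u v then w v.castSucc else 0)
            - (if v = j then w (Fin.castSucc j) else 0) := by
        intro v
        by_cases hv : v = j
        · subst hv
          simp [hGw1, hij]
        · simp [hGw1, hv]
      rw [Finset.sum_congr rfl fun v _ => e1 v, Finset.sum_sub_distrib]
      simp [hGw2]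
      ring
    · have e1 : ∀ v : Fin n, (if Gw u.castSucc v.castSucc then w v.castSucc else 0)
          = (if G u v then w v.castSucc else 0) := by
        intro v
        simp [hGw1, hu]
      rw [Finset.sum_congr rfl fun v _ => e1 v]
      simp [hGw2, hu]
  have hrowlast : ∀ (w : Fin (n+1) → ℝ),
      (∑ b, if Gw (Fin.last n) b then w b else 0) = w (Fin.castSucc j) := by
    intro w
    rw [Fin.sum_univ_castSucc]
    have e1 : ∀ v : Fin n, (if Gw (Fin.last n) v.castSucc then w v.castSucc else 0)
        = (if v = j then w v.castSucc else 0) := by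
      intro v
      simp [hGw3]
    rw [Finset.sum_congr rfl fun v _ => e1 v]
    simp [hGw4]
  -- outdegrees in Gw
  have hdegw : ∀ u : Fin n, ((outdeg Gw u.castSucc : ℝ)) = ((outdeg G u : ℝ)) := by
    intro u
    rw [PF9_outdeg_sum, PF9_outdeg_sum, hrow u (fun _ => (1:ℝ))]
    simp
  have hdeglast : ((outdeg Gw (Fin.last n) : ℝ)) = 1 := by
    rw [PF9_outdeg_sum, hrowlast (fun _ => (1:ℝ))]
  -- the sub-invariance
  have hsub : ∀ a, B.mulVec y a ≤ r * y a := by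
    intro a
    refine Fin.lastCases ?_ ?_ a
    · rw [hB, PF9_Aalpha_mulVec, hdeglast, hrowlast y]
      have ey : y (Fin.last n) = c := by simp [hy]
      have ej : y (Fin.castSucc j) = x j := by simp [hy]
      rw [ey, ej]
      have hcc : (r - α) * c = (1 - α) * x j := by
        rw [hc]
        field_simp
      nlinarith [hcc]
    · intro u
      rw [hB, PF9_Aalpha_mulVec, hdegw, hrow u y]
      have ey : y u.castSucc = x u := by simp [hy]
      have ej : y (Fin.castSucc j) = x j := by simp [hy]
      have elast : y (Fin.last n) = c := by simp [hy]
      have esum : (∑ v, if G u v then y v.castSucc else 0)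
          = ∑ v, (if G u v then x v else 0) :=
        Finset.sum_congr rfl fun v _ => by simp [hy]
      have hAxu : α * ((outdeg G u : ℝ)) * x u
          + (1 - α) * ∑ v, (if G u v then x v else 0) = r * x u := by
        have h1 : (Aalpha α G).mulVec x u = r * x u := by simpa using congrFun hAx u
        rw [PF9_Aalpha_mulVec] at h1
        exact h1
      rw [ey, elast, ej, esum]
      by_cases hu : u = i
      · rw [if_pos hu]
        have h2 : (0:ℝ) ≤ (1 - α) * (x j - c) :=
          mul_nonneg h1α.le (sub_nonneg.mpr hcle)
        nlinarith [hAxu]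
      · rw [if_neg hu, add_zero, hAxu]
  -- conclude
  have hBle : specRad B ≤ r :=
    specRad_le_of_subinvariant B hBnn y hypos r hsub
  have hxne : x ≠ 0 := by
    intro h0
    have := hx i
    rw [h0] at this
    simp at this
  have hrle : r ≤ specRad A := le_specRad_of_eigvec A r hr0 x hxne hAx
  calc lamAlpha α Gw = specRad B := rfl
    _ ≤ r := hBle
    _ ≤ specRad A := hrle
    _ = lamAlpha α G := rfl
end

section
/- The digraph K(n,n−2,1), obtained from the complete digraph K↔_n by deleting a single arc, is the unique digraph achieving the second maximum A_α spectral radius among all strongly connected digraphs on n vertices, and its A_α spectral radius equals (n + αn − 2 − α + √((1−α)²n² + 2α(1−α)n + α² + 4α − 4)) / 2, for all α ∈ [0,1). -/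
open scoped Classical
open Matrix

open Polynomial in
lemma my_eval_charpoly {n : ℕ} {R : Type*} [CommRing R] (M : Matrix (Fin n) (Fin n) R) (μ : R) :
    M.charpoly.eval μ = (Matrix.diagonal (fun _ => μ) - M).det := by
  rw [Matrix.charpoly, ← Polynomial.coe_evalRingHom, RingHom.map_det]
  congr 1
  ext i j
  by_cases h : i = j <;>
    simp [h, Matrix.charmatrix_apply, Matrix.diagonal_apply, Matrix.one_apply]

lemma eigen_of_isRoot {n : ℕ} (M : Matrix (Fin n) (Fin n) ℂ) {μ : ℂ}
    (h : M.charpoly.IsRoot μ) : ∃ x : Fin n → ℂ, x ≠ 0 ∧ M.mulVec x = μ • x := by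
  have hdet : (Matrix.diagonal (fun _ => μ) - M).det = 0 := by
    rw [← my_eval_charpoly]; exact h
  obtain ⟨v, hv, hv2⟩ := (Matrix.exists_mulVec_eq_zero_iff).2 hdet
  refine ⟨v, hv, ?_⟩
  rw [Matrix.sub_mulVec] at hv2
  have h2 : (Matrix.diagonal (fun _ => μ)).mulVec v = μ • v := by
    ext i; simp [Matrix.mulVec_diagonal]
  rw [h2] at hv2
  exact (sub_eq_zero.mp hv2).symm

lemma specRad_set_finite {n : ℕ} (M : Matrix (Fin n) (Fin n) ℝ) :
    {r : ℝ | ∃ μ : ℂ, (M.map Complex.ofReal).charpoly.IsRoot μ ∧ r = ‖μ‖}.Finite := by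
  have h1 : {μ : ℂ | (M.map Complex.ofReal).charpoly.IsRoot μ}.Finite :=
    Polynomial.finite_setOf_isRoot (M.map Complex.ofReal).charpoly_monic.ne_zero
  have : {r : ℝ | ∃ μ : ℂ, (M.map Complex.ofReal).charpoly.IsRoot μ ∧ r = ‖μ‖}
      = (fun μ : ℂ => ‖μ‖) '' {μ : ℂ | (M.map Complex.ofReal).charpoly.IsRoot μ} := by
    ext r; simp [eq_comm, Set.mem_image]
  rw [this]
  exact h1.image _

lemma specRad_set_nonempty {n : ℕ} (hn : 0 < n) (M : Matrix (Fin n) (Fin n) ℝ) :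
    {r : ℝ | ∃ μ : ℂ, (M.map Complex.ofReal).charpoly.IsRoot μ ∧ r = ‖μ‖}.Nonempty := by
  have hdeg : 0 < (M.map Complex.ofReal).charpoly.degree := by
    have h1 := (M.map Complex.ofReal).charpoly_natDegree_eq_dim
    have h2 := (M.map Complex.ofReal).charpoly_monic.ne_zero
    rw [Polynomial.degree_eq_natDegree h2, h1]
    exact_mod_cast Nat.cast_pos.mpr (by simpa using hn)
  obtain ⟨μ, hμ⟩ := Complex.exists_root hdeg
  exact ⟨‖μ‖, μ, hμ, rfl⟩

lemma core_bound {n : ℕ} {M N : Matrix (Fin n) (Fin n) ℝ}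
    (hM0 : ∀ i j, 0 ≤ M i j) (hMN : ∀ i j, M i j ≤ N i j)
    {y : Fin n → ℝ} (hy : ∀ i, 0 < y i) {ρ : ℝ}
    (hNy : N.mulVec y = ρ • y)
    {μ : ℂ} {x : Fin n → ℂ} (hx : x ≠ 0)
    (hMx : (M.map Complex.ofReal).mulVec x = μ • x) :
    ‖μ‖ ≤ ρ ∧
      (‖μ‖ = ρ →
        (∀ i j, Relation.ReflTransGen (fun a b => 0 < N a b) i j) → M = N) := by
  classical
  set z : Fin n → ℝ := fun i => ‖x i‖ with hz
  have hz0 : ∀ i, 0 ≤ z i := fun i => norm_nonneg _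
  obtain ⟨i₁, hi₁⟩ : ∃ i, x i ≠ 0 := by
    by_contra h; push_neg at h; exact hx (funext h)
  obtain ⟨i₀, -, hmax⟩ := Finset.exists_max_image Finset.univ (fun i => z i / y i)
    ⟨i₁, Finset.mem_univ i₁⟩
  set t : ℝ := z i₀ / y i₀ with htdef
  have ht : 0 < t := lt_of_lt_of_le (div_pos (by simpa [hz] using hi₁) (hy i₁))
    (hmax i₁ (Finset.mem_univ i₁))
  have hzy : ∀ j, z j ≤ t * y j := by
    intro j
    have := hmax j (Finset.mem_univ j)
    calc z j = z j / y j * y j := (div_mul_cancel₀ _ (hy j).ne').symm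
    _ ≤ t * y j := mul_le_mul_of_nonneg_right this (hy j).le
  have hzi₀ : z i₀ = t * y i₀ := (div_mul_cancel₀ _ (hy i₀).ne').symm
  have hNrow : ∀ i, ∑ j, N i j * y j = ρ * y i := by
    intro i
    have := congrFun hNy i
    simpa [Matrix.mulVec, dotProduct, mul_comm] using this
  have hkey : ∀ i, ‖μ‖ * z i ≤ ∑ j, M i j * z j := by
    intro i
    have h1 : ((M.map Complex.ofReal).mulVec x) i = ∑ j, (M i j : ℂ) * x j := by
      simp [Matrix.mulVec, dotProduct, Matrix.map_apply]
    have h2 : ‖∑ j, (M i j : ℂ) * x j‖ ≤ ∑ j, M i j * z j := by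
      refine le_trans (norm_sum_le _ _) (le_of_eq (Finset.sum_congr rfl ?_))
      intro j _
      simp [hz, norm_mul, Complex.norm_real, Real.norm_eq_abs, abs_of_nonneg (hM0 i j)]
    calc ‖μ‖ * z i = ‖(μ • x) i‖ := by simp [hz, norm_mul]
    _ = ‖∑ j, (M i j : ℂ) * x j‖ := by rw [← h1, hMx]
    _ ≤ ∑ j, M i j * z j := h2
  have hMz_le : ∀ i, ∑ j, M i j * z j ≤ ∑ j, N i j * z j := by
    intro i
    exact Finset.sum_le_sum fun j _ => mul_le_mul_of_nonneg_right (hMN i j) (hz0 j)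
  have hNz_le : ∀ i, ∑ j, N i j * z j ≤ ∑ j, N i j * (t * y j) := by
    intro i
    refine Finset.sum_le_sum fun j _ => mul_le_mul_of_nonneg_left (hzy j) ?_
    exact le_trans (hM0 i j) (hMN i j)
  have hNty : ∀ i, ∑ j, N i j * (t * y j) = t * (ρ * y i) := by
    intro i
    rw [← hNrow i, Finset.mul_sum]
    exact Finset.sum_congr rfl fun j _ => by ring
  have hchain : ∀ i, ‖μ‖ * z i ≤ t * (ρ * y i) := by
    intro i
    calc ‖μ‖ * z i ≤ ∑ j, M i j * z j := hkey i
    _ ≤ ∑ j, N i j * z j := hMz_le i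
    _ ≤ ∑ j, N i j * (t * y j) := hNz_le i
    _ = t * (ρ * y i) := hNty i
  have hle : ‖μ‖ ≤ ρ := by
    have := hchain i₀
    rw [hzi₀] at this
    have h3 : 0 < t * y i₀ := mul_pos ht (hy i₀)
    nlinarith
  refine ⟨hle, ?_⟩
  intro habs hSC
  have hstep : ∀ i, z i = t * y i → ∀ j, 0 < N i j → z j = t * y j := by
    intro i hzi j hNij
    have heq : ∑ j, N i j * z j = ∑ j, N i j * (t * y j) := by
      have h1 := hkey i
      have h2 := hMz_le i
      have h3 := hNz_le i
      have h4 := hNty i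
      rw [habs, hzi] at h1
      have h5 : ρ * (t * y i) = t * (ρ * y i) := by ring
      rw [h5] at h1
      linarith
    have := (Finset.sum_eq_sum_iff_of_le
      (fun j _ => mul_le_mul_of_nonneg_left (hzy j) (le_trans (hM0 i j) (hMN i j)))).1 heq
      j (Finset.mem_univ j)
    exact mul_left_cancel₀ (ne_of_gt hNij) this
  have hall : ∀ i, z i = t * y i := by
    intro i
    have hrt := hSC i₀ i
    induction hrt with
    | refl => exact hzi₀
    | tail _ hab ih => exact hstep _ ih _ hab
  ext i j
  have heq2 : ∑ j, M i j * z j = ∑ j, N i j * z j := by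
    have h1 := hkey i
    have h3 := hNz_le i
    have h4 := hNty i
    rw [habs, hall i] at h1
    have h2 := hMz_le i
    have h5 : ρ * (t * y i) = t * (ρ * y i) := by ring
    rw [h5] at h1
    linarith
  have := (Finset.sum_eq_sum_iff_of_le
    (fun j _ => mul_le_mul_of_nonneg_right (hMN i j) (hz0 j))).1 heq2 j (Finset.mem_univ j)
  have hzj : 0 < z j := by rw [hall j]; exact mul_pos ht (hy j)
  exact mul_right_cancel₀ (ne_of_gt hzj) this


lemma K_iff {n : ℕ} (hn : 3 ≤ n) (i j : Fin n) :
    Knkm n (n - 2) 1 i j ↔ i ≠ j ∧ ¬(i.val = n - 1 ∧ j.val = 0) := by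
  unfold Knkm
  constructor
  · rintro ⟨h1, h2⟩
    exact ⟨h1, fun ⟨ha, hb⟩ => h2 ⟨by omega, by omega⟩⟩
  · rintro ⟨h1, h2⟩
    refine ⟨h1, fun ⟨ha, hb⟩ => h2 ⟨?_, ?_⟩⟩
    · have := i.isLt; omega
    · omega

lemma outdeg_K {n : ℕ} (hn : 3 ≤ n) (i : Fin n) :
    outdeg (Knkm n (n - 2) 1) i = if i.val = n - 1 then n - 2 else n - 1 := by
  have h0n : 0 < n := by omega
  unfold outdeg
  by_cases hi : i.val = n - 1
  · rw [if_pos hi]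
    have hset : (Finset.univ.filter (fun j => Knkm n (n-2) 1 i j))
        = (Finset.univ.erase i).erase ⟨0, h0n⟩ := by
      ext j
      simp only [Finset.mem_filter, Finset.mem_univ, true_and, Finset.mem_erase, and_true]
      rw [K_iff hn]
      constructor
      · rintro ⟨h1, h2⟩
        refine ⟨fun h => h2 ⟨hi, by simp [h]⟩, fun h => h1 h.symm⟩
      · rintro ⟨h1, h2⟩
        refine ⟨fun h => h2 h.symm, ?_⟩
        rintro ⟨-, hb⟩
        exact h1 (Fin.ext hb)
    rw [hset]
    have h0mem : (⟨0, h0n⟩ : Fin n) ∈ Finset.univ.erase i := by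
      simp only [Finset.mem_erase, Finset.mem_univ, and_true]
      intro h
      rw [← h] at hi
      simp at hi
      omega
    rw [Finset.card_erase_of_mem h0mem, Finset.card_erase_of_mem (Finset.mem_univ _),
      Finset.card_univ, Fintype.card_fin]
    omega
  · rw [if_neg hi]
    have hset : (Finset.univ.filter (fun j => Knkm n (n-2) 1 i j)) = Finset.univ.erase i := by
      ext j
      simp only [Finset.mem_filter, Finset.mem_univ, true_and, Finset.mem_erase, and_true]
      rw [K_iff hn]
      constructor
      · rintro ⟨h1, -⟩; exact fun h => h1 h.symm
      · intro h1
        refine ⟨fun h => h1 h.symm, ?_⟩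
        rintro ⟨ha, -⟩
        exact hi ha
    rw [hset, Finset.card_erase_of_mem (Finset.mem_univ _), Finset.card_univ,
      Fintype.card_fin]

lemma Aalpha_mulVec {n : ℕ} (α : ℝ) (G : Fin n → Fin n → Prop) (y : Fin n → ℝ) (i : Fin n) :
    (Aalpha α G).mulVec y i
      = α * (outdeg G i : ℝ) * y i + (1-α) * ∑ j, (if G i j then y j else 0) := by
  simp only [Matrix.mulVec, dotProduct, Aalpha, Matrix.add_apply, Matrix.smul_apply,
    Matrix.diagonal_apply, Matrix.of_apply, smul_eq_mul, add_mul]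
  rw [Finset.sum_add_distrib]
  congr 1
  · rw [Finset.sum_eq_single i]
    · simp [mul_comm]
    · intro j _ hj
      simp [Ne.symm hj]
    · simp
  · rw [Finset.mul_sum]
    refine Finset.sum_congr rfl fun j _ => ?_
    split_ifs <;> ring

lemma sum_ite_mem_eq {n : ℕ} (y : Fin n → ℝ) (P : Fin n → Prop) (s : Finset (Fin n))
    (h : ∀ j, P j ↔ j ∈ s) : ∑ j, (if P j then y j else 0) = ∑ j ∈ s, y j := by
  rw [← Finset.sum_filter]
  congr 1
  ext j
  simp [h]

lemma K_eigen {n : ℕ} (hn : 3 ≤ n) {α ρ : ℝ} (hα0 : 0 ≤ α) (hα1 : α < 1)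
    (hq : ρ^2 - ((n:ℝ) + α*n - 2 - α)*ρ + (α*n-1)*((n:ℝ)-2) = 0) :
    (Aalpha α (Knkm n (n-2) 1)).mulVec
      (fun i => if i.val = n-1 then (1-α)*((n:ℝ)-2) else ρ - α*n + 2*α)
      = ρ • (fun i => if i.val = n-1 then (1-α)*((n:ℝ)-2) else ρ - α*n + 2*α) := by
  have h0n : 0 < n := by omega
  set b : ℝ := ρ - α*n + 2*α with hb
  set c : ℝ := (1-α)*((n:ℝ)-2) with hc
  set y : Fin n → ℝ := fun i => if i.val = n-1 then c else b with hy
  set last : Fin n := ⟨n-1, by omega⟩ with hlast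
  set z0 : Fin n := ⟨0, h0n⟩ with hz0
  have hylast : y last = c := by simp [hy, hlast]
  have hyz0 : y z0 = b := by
    have : z0.val ≠ n - 1 := by simp [hz0]; omega
    simp [hy, this]
  have hyval : ∀ j : Fin n, j.val ≠ n - 1 → y j = b := fun j hj => by simp [hy, hj]
  have hz0last : z0 ≠ last := by
    intro h
    have := congrArg Fin.val h
    simp [hz0, hlast] at this
    omega
  have hYsum : ∑ j, y j = ((n:ℝ)-1)*b + c := by
    have hcong : ∀ j : Fin n, y j = b + (if j = last then c - b else 0) := by
      intro j
      by_cases h : j = last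
      · simp [h, hylast]
      · have hv : j.val ≠ n - 1 := fun hv => h (Fin.ext (by simp [hlast, hv]))
        simp [hyval j hv, h]
    rw [Finset.sum_congr rfl fun j _ => hcong j]
    rw [Finset.sum_add_distrib, Finset.sum_ite_eq' Finset.univ last (fun _ => c - b)]
    simp [Finset.card_univ]
    ring
  have hcast2 : (((n-2 : ℕ)):ℝ) = (n:ℝ) - 2 := by
    rw [Nat.cast_sub (by omega : 2 ≤ n)]; norm_num
  have hcast1 : (((n-1 : ℕ)):ℝ) = (n:ℝ) - 1 := by
    rw [Nat.cast_sub (by omega : 1 ≤ n)]; norm_num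
  funext i
  rw [Aalpha_mulVec, outdeg_K hn]
  by_cases hi : i.val = n - 1
  · -- last row
    have hiz : i = last := Fin.ext (by simp [hlast, hi])
    have hsum : ∑ j, (if Knkm n (n-2) 1 i j then y j else 0)
        = ((n:ℝ)-1)*b + c - y i - y z0 := by
      rw [sum_ite_mem_eq y _ ((Finset.univ.erase i).erase z0) ?_]
      · rw [Finset.sum_erase_eq_sub (by simp [Finset.mem_erase, Ne.symm]; exact fun h => hz0last (h ▸ hiz ▸ rfl) : z0 ∈ Finset.univ.erase i)]
        rw [Finset.sum_erase_eq_sub (Finset.mem_univ i), hYsum]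
      · intro j
        rw [K_iff hn]
        simp only [Finset.mem_erase, Finset.mem_univ, and_true]
        constructor
        · rintro ⟨h1, h2⟩
          exact ⟨fun h => h2 ⟨hi, by simp [h, hz0]⟩, fun h => h1 h.symm⟩
        · rintro ⟨h1, h2⟩
          refine ⟨fun h => h2 h.symm, ?_⟩
          rintro ⟨-, hbv⟩
          exact h1 (Fin.ext (by simp [hz0, hbv]))
    rw [hsum, if_pos hi, hcast2]
    simp only [Pi.smul_apply, smul_eq_mul]
    rw [hiz, hylast, hyz0]
    rw [hb, hc]
    ring
  · -- generic row
    have hsum : ∑ j, (if Knkm n (n-2) 1 i j then y j else 0)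
        = ((n:ℝ)-1)*b + c - y i := by
      rw [sum_ite_mem_eq y _ (Finset.univ.erase i) ?_]
      · rw [Finset.sum_erase_eq_sub (Finset.mem_univ i), hYsum]
      · intro j
        rw [K_iff hn]
        simp only [Finset.mem_erase, Finset.mem_univ, and_true]
        constructor
        · rintro ⟨h1, -⟩; exact fun h => h1 h.symm
        · intro h1
          refine ⟨fun h => h1 h.symm, ?_⟩
          rintro ⟨ha, -⟩
          exact hi ha
    rw [hsum, if_neg hi, hcast1]
    simp only [Pi.smul_apply, smul_eq_mul]
    rw [hyval i hi]
    rw [hb, hc]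
    linear_combination -hq
lemma Aalpha_apply {n : ℕ} (α : ℝ) (G : Fin n → Fin n → Prop) (i j : Fin n) :
    Aalpha α G i j = α * (if i = j then (outdeg G i : ℝ) else 0)
      + (1-α) * (if G i j then 1 else 0) := by
  simp [Aalpha, Matrix.diagonal_apply]

lemma Aalpha_nonneg {n : ℕ} {α : ℝ} (hα0 : 0 ≤ α) (hα1 : α < 1)
    (G : Fin n → Fin n → Prop) (i j : Fin n) : 0 ≤ Aalpha α G i j := by
  rw [Aalpha_apply]
  have h1 : (0:ℝ) ≤ 1 - α := by linarith
  positivity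

lemma Aalpha_mono {n : ℕ} {α : ℝ} (hα0 : 0 ≤ α) (hα1 : α < 1)
    {G H : Fin n → Fin n → Prop} (hsub : ∀ i j, G i j → H i j) (i j : Fin n) :
    Aalpha α G i j ≤ Aalpha α H i j := by
  rw [Aalpha_apply, Aalpha_apply]
  have h1 : (0:ℝ) ≤ 1 - α := by linarith
  have hdeg : (outdeg G i : ℝ) ≤ (outdeg H i : ℝ) := by
    have : (Finset.univ.filter (fun j => G i j)) ⊆ (Finset.univ.filter (fun j => H i j)) := by
      intro j hj
      simp only [Finset.mem_filter, Finset.mem_univ, true_and] at hj ⊢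
      exact hsub i j hj
    exact_mod_cast Finset.card_le_card this
  have h2 : (if G i j then (1:ℝ) else 0) ≤ (if H i j then 1 else 0) := by
    by_cases hg : G i j
    · rw [if_pos hg, if_pos (hsub i j hg)]
    · rw [if_neg hg]
      split_ifs <;> norm_num
  have h3 : (if i = j then (outdeg G i : ℝ) else 0) ≤ (if i = j then (outdeg H i : ℝ) else 0) := by
    split_ifs with h
    · exact hdeg
    · exact le_refl 0
  exact add_le_add (mul_le_mul_of_nonneg_left h3 hα0) (mul_le_mul_of_nonneg_left h2 h1)

lemma K_pattern_pos {n : ℕ} (hn : 3 ≤ n) {α : ℝ} (hα0 : 0 ≤ α) (hα1 : α < 1)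
    {a b : Fin n} (hK : Knkm n (n-2) 1 a b) : 0 < Aalpha α (Knkm n (n-2) 1) a b := by
  rw [Aalpha_apply, if_pos hK, if_neg hK.1]
  have : (0:ℝ) ≤ α * (if a = a then 1 else 0) := by positivity
  nlinarith [mul_nonneg hα0 (Nat.cast_nonneg (outdeg (Knkm n (n-2) 1) a) : (0:ℝ) ≤ _)]

lemma K_SC {n : ℕ} (hn : 3 ≤ n) {α : ℝ} (hα0 : 0 ≤ α) (hα1 : α < 1) :
    ∀ i j : Fin n, Relation.ReflTransGen
      (fun a b => 0 < Aalpha α (Knkm n (n-2) 1) a b) i j := by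
  intro i j
  by_cases hij : i = j
  · exact hij ▸ Relation.ReflTransGen.refl
  by_cases hlz : i.val = n - 1 ∧ j.val = 0
  · set mid : Fin n := ⟨1, by omega⟩ with hmid
    have h1 : Knkm n (n-2) 1 i mid := by
      constructor
      · intro h; rw [h] at hlz; simp only [hmid] at hlz; omega
      · rintro ⟨-, hb⟩
        have : (1:ℕ) < 1 := hb
        omega
    have h2 : Knkm n (n-2) 1 mid j := by
      constructor
      · intro h; rw [← h] at hlz; simp only [hmid] at hlz; omega
      · rintro ⟨ha, -⟩
        have : 1 + (n-2) ≤ 1 := ha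
        omega
    exact Relation.ReflTransGen.tail (Relation.ReflTransGen.single
      (K_pattern_pos hn hα0 hα1 h1)) (K_pattern_pos hn hα0 hα1 h2)
  · refine Relation.ReflTransGen.single (K_pattern_pos hn hα0 hα1 ⟨hij, ?_⟩)
    rintro ⟨ha, hb⟩
    have := i.isLt
    exact hlz ⟨by omega, by omega⟩

lemma outdeg_relabel {n : ℕ} (G : Fin n → Fin n → Prop) (e : Equiv.Perm (Fin n)) (i : Fin n) :
    outdeg (fun a b => G (e a) (e b)) i = outdeg G (e i) := by
  unfold outdeg
  apply Finset.card_nbij (fun j => e j)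
  · intro j hj
    simp only [Finset.mem_coe, Finset.mem_filter, Finset.mem_univ, true_and] at hj ⊢
    exact hj
  · intro a ha b hb hab
    exact e.injective hab
  · intro j hj
    simp only [Set.mem_image, Finset.mem_coe, Finset.mem_filter, Finset.mem_univ, true_and] at hj ⊢
    exact ⟨e.symm j, by simpa using hj, by simp⟩

lemma Aalpha_relabel {n : ℕ} (α : ℝ) (G : Fin n → Fin n → Prop) (e : Equiv.Perm (Fin n)) :
    Aalpha α (fun a b => G (e a) (e b)) = (Aalpha α G).submatrix e e := by
  ext i j
  simp only [Matrix.submatrix_apply, Aalpha, Matrix.add_apply, Matrix.smul_apply,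
    Matrix.diagonal_apply, Matrix.of_apply, smul_eq_mul, outdeg_relabel,
    EmbeddingLike.apply_eq_iff_eq]

lemma specRad_submatrix {n : ℕ} (M : Matrix (Fin n) (Fin n) ℝ) (e : Equiv.Perm (Fin n)) :
    specRad (M.submatrix e e) = specRad M := by
  unfold specRad
  have h : ((M.submatrix e e).map Complex.ofReal).charpoly
      = (M.map Complex.ofReal).charpoly := by
    have h1 : (M.submatrix e e).map Complex.ofReal
        = (M.map Complex.ofReal).submatrix e e := rfl
    rw [h1]
    have h2 : (M.map Complex.ofReal).submatrix ⇑e ⇑e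
        = Matrix.reindex e.symm e.symm (M.map Complex.ofReal) := rfl
    rw [h2, Matrix.charpoly_reindex]
  rw [h]

/-- `K(n,n-2,1)` (the complete digraph minus one arc) is the unique digraph
achieving the second maximum `A_α` spectral radius among strongly connected digraphs
on `n` vertices, and the value of this spectral radius. -/
theorem stmt16 {n : ℕ} (hn : 3 ≤ n) (α : ℝ) (hα0 : 0 ≤ α) (hα1 : α < 1) :
    lamAlpha α (Knkm n (n - 2) 1) =
      ((n : ℝ) + α * n - 2 - α +
        Real.sqrt ((1 - α) ^ 2 * (n : ℝ) ^ 2 + 2 * α * (1 - α) * n +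
          α ^ 2 + 4 * α - 4)) / 2 ∧
    ∀ G : Fin n → Fin n → Prop, (∀ i, ¬ G i i) → SConn G →
      ¬(∀ u v : Fin n, u ≠ v → G u v) →
      lamAlpha α G ≤ lamAlpha α (Knkm n (n - 2) 1) ∧
      (lamAlpha α G = lamAlpha α (Knkm n (n - 2) 1) ↔
        DIso G (Knkm n (n - 2) 1)) := by
  classical
  have h0n : 0 < n := by omega
  have hx3 : (3:ℝ) ≤ (n:ℝ) := by exact_mod_cast hn
  have h1α : (0:ℝ) < 1 - α := by linarith
  set D : ℝ := (1 - α) ^ 2 * (n : ℝ) ^ 2 + 2 * α * (1 - α) * n + α ^ 2 + 4 * α - 4 with hDdef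
  have hD : 0 ≤ D := by
    rw [hDdef]
    nlinarith [sq_nonneg ((1-α)*(n:ℝ) + α - 3 + 2*α), sq_nonneg (2*α - 2),
      mul_nonneg (sub_nonneg.2 hα1.le) (by linarith : (0:ℝ) ≤ (n:ℝ) - 3), sq_nonneg (2*α-1)]
  set ρ : ℝ := ((n : ℝ) + α * n - 2 - α + Real.sqrt D) / 2 with hρdef
  have hsqrt0 : 0 ≤ Real.sqrt D := Real.sqrt_nonneg D
  have hq : ρ^2 - ((n:ℝ) + α*n - 2 - α)*ρ + (α*n-1)*((n:ℝ)-2) = 0 := by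
    have hs := Real.sq_sqrt hD
    rw [hρdef]
    rw [hDdef] at hs
    linear_combination (1/4) * hs
  have hbpos : 0 < ρ - α*n + 2*α := by
    rw [hρdef]
    nlinarith [mul_nonneg (sub_nonneg.2 hα1.le) (by linarith : (0:ℝ) ≤ (n:ℝ) - 3)]
  have hρ0 : 0 ≤ ρ := by
    rw [hρdef]
    nlinarith [mul_nonneg hα0 (by linarith : (0:ℝ) ≤ (n:ℝ) - 1)]
  set y : Fin n → ℝ := fun i => if i.val = n-1 then (1-α)*((n:ℝ)-2) else ρ - α*n + 2*α with hydef
  have hy : ∀ i, 0 < y i := by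
    intro i
    rw [hydef]
    dsimp only
    split_ifs
    · have : (0:ℝ) < (n:ℝ) - 2 := by linarith
      positivity
    · exact hbpos
  set N := Aalpha α (Knkm n (n-2) 1) with hNdef
  have hNy : N.mulVec y = ρ • y := K_eigen hn hα0 hα1 hq
  have hN0 : ∀ i j, 0 ≤ N i j := fun i j => Aalpha_nonneg hα0 hα1 _ i j
  have hSC : ∀ i j : Fin n, Relation.ReflTransGen (fun a b => 0 < N a b) i j :=
    K_SC hn hα0 hα1
  -- the key comparison
  have key : ∀ (M : Matrix (Fin n) (Fin n) ℝ), (∀ i j, 0 ≤ M i j) → (∀ i j, M i j ≤ N i j) →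
      specRad M ≤ ρ ∧ (specRad M = ρ → M = N) := by
    intro M hM0 hMN
    have hne := specRad_set_nonempty h0n M
    have hfin := specRad_set_finite M
    have hub : ∀ r ∈ {r : ℝ | ∃ μ : ℂ, (M.map Complex.ofReal).charpoly.IsRoot μ
        ∧ r = ‖μ‖}, r ≤ ρ := by
      rintro r ⟨μ, hroot, rfl⟩
      obtain ⟨xv, hxv, hMx⟩ := eigen_of_isRoot _ hroot
      exact (core_bound hM0 hMN hy hNy hxv hMx).1
    constructor
    · exact csSup_le hne hub
    · intro hEq
      have hmem := Set.Nonempty.csSup_mem hne hfin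
      rw [show sSup {r : ℝ | ∃ μ : ℂ, (M.map Complex.ofReal).charpoly.IsRoot μ
        ∧ r = ‖μ‖} = specRad M from rfl, hEq] at hmem
      obtain ⟨μ, hroot, habs⟩ := hmem
      obtain ⟨xv, hxv, hMx⟩ := eigen_of_isRoot _ hroot
      exact (core_bound hM0 hMN hy hNy hxv hMx).2 habs.symm hSC
  -- part 1 : specRad N = ρ
  have hpart1 : specRad N = ρ := by
    have hle := (key N hN0 (fun i j => le_refl _)).1
    have hyne : y ≠ 0 := by
      intro h
      have := congrFun h ⟨0, h0n⟩
      exact absurd this (ne_of_gt (hy _))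
    have hroot : ((N.map Complex.ofReal).charpoly).IsRoot ((ρ : ℝ) : ℂ) := by
      have hdet : (Matrix.diagonal (fun _ => ρ) - N).det = 0 := by
        rw [← Matrix.exists_mulVec_eq_zero_iff]
        refine ⟨y, hyne, ?_⟩
        rw [Matrix.sub_mulVec, hNy]
        have : (Matrix.diagonal (fun _ => ρ)).mulVec y = ρ • y := by
          ext i; simp [Matrix.mulVec_diagonal]
        rw [this, sub_self]
      have h1 : N.charpoly.eval ρ = 0 := by rw [my_eval_charpoly]; exact hdet
      have h2 : (N.map Complex.ofReal).charpoly
          = N.charpoly.map (Complex.ofRealHom : ℝ →+* ℂ) :=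
        Matrix.charpoly_map N Complex.ofRealHom
      rw [h2]
      show Polynomial.eval (Complex.ofRealHom ρ) _ = 0
      rw [Polynomial.eval_map, Polynomial.eval₂_at_apply, h1]
      simp
    have hmem : ρ ∈ {r : ℝ | ∃ μ : ℂ, (N.map Complex.ofReal).charpoly.IsRoot μ
        ∧ r = ‖μ‖} := ⟨((ρ:ℝ):ℂ), hroot, by
          rw [Complex.norm_real, Real.norm_eq_abs, abs_of_nonneg hρ0]⟩
    exact le_antisymm hle (le_csSup (specRad_set_finite N).bddAbove hmem)
  constructor
  · exact hpart1
  · intro G hloop hconn hnc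
    push_neg at hnc
    obtain ⟨u, v, huv, hGuv⟩ := hnc
    set last : Fin n := ⟨n-1, by omega⟩ with hlast
    set z0 : Fin n := ⟨0, h0n⟩ with hz0
    have hz0last : z0 ≠ last := by
      intro h
      have := congrArg Fin.val h
      simp [hz0, hlast] at this
      omega
    set e₁ : Equiv.Perm (Fin n) := Equiv.swap u last with he₁
    set e : Equiv.Perm (Fin n) := e₁.trans (Equiv.swap (e₁ v) z0) with he
    have heu : e u = last := by
      rw [he]
      simp only [Equiv.trans_apply]
      rw [he₁, Equiv.swap_apply_left]
      refine Equiv.swap_apply_of_ne_of_ne ?_ (Ne.symm hz0last)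
      intro h
      exact huv (e₁.injective (by rw [← h, he₁, Equiv.swap_apply_left]))
    have hev : e v = z0 := by
      rw [he]
      simp only [Equiv.trans_apply]
      exact Equiv.swap_apply_left _ _
    set G' : Fin n → Fin n → Prop := fun a b => G (e.symm a) (e.symm b) with hG'
    have hG'loop : ∀ i, ¬G' i i := fun i => hloop _
    have hsub : ∀ i j, G' i j → Knkm n (n-2) 1 i j := by
      intro i j hij
      rw [K_iff hn]
      constructor
      · intro h
        rw [h] at hij
        exact hG'loop j hij
      · rintro ⟨ha, hb⟩
        have hi : i = last := Fin.ext (by simpa [hlast] using ha)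
        have hj : j = z0 := Fin.ext (by simpa [hz0] using hb)
        rw [hi, hj, hG'] at hij
        rw [← heu, ← hev] at hij
        simp only [Equiv.symm_apply_apply] at hij
        exact hGuv hij
    set M := Aalpha α G' with hM
    have hlam : lamAlpha α G = specRad M := by
      rw [hM, hG']
      show lamAlpha α G = specRad (Aalpha α (fun a b => G (e.symm a) (e.symm b)))
      rw [Aalpha_relabel α G e.symm, specRad_submatrix]
      rfl
    have hM0 : ∀ i j, 0 ≤ M i j := fun i j => Aalpha_nonneg hα0 hα1 _ i j
    have hMN : ∀ i j, M i j ≤ N i j := fun i j => Aalpha_mono hα0 hα1 hsub i j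
    obtain ⟨hle, hstrict⟩ := key M hM0 hMN
    have hlamK : lamAlpha α (Knkm n (n-2) 1) = ρ := hpart1
    refine ⟨by rw [hlam, hlamK]; exact hle, ?_⟩
    constructor
    · intro hEq
      rw [hlam, hlamK] at hEq
      have hMeqN : M = N := hstrict hEq
      -- recover relation equality
      have hrel : ∀ i j, G' i j ↔ Knkm n (n-2) 1 i j := by
        intro i j
        by_cases hij : i = j
        · constructor
          · intro h; exact absurd h (hij ▸ hG'loop i)
          · intro h; exact absurd rfl (hij ▸ h.1)
        · have hent : Aalpha α G' i j = Aalpha α (Knkm n (n-2) 1) i j := by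
            rw [← hM, ← hNdef, hMeqN]
          rw [Aalpha_apply, Aalpha_apply, if_neg hij, if_neg hij] at hent
          have h2 : (if G' i j then (1:ℝ) else 0) = (if Knkm n (n-2) 1 i j then 1 else 0) :=
            mul_left_cancel₀ (ne_of_gt h1α) (by linarith)
          by_cases hg : G' i j
          · rw [if_pos hg] at h2
            by_cases hk : Knkm n (n-2) 1 i j
            · exact ⟨fun _ => hk, fun _ => hg⟩
            · rw [if_neg hk] at h2; norm_num at h2
          · rw [if_neg hg] at h2
            by_cases hk : Knkm n (n-2) 1 i j
            · rw [if_pos hk] at h2; norm_num at h2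
            · exact ⟨fun h => absurd h hg, fun h => absurd h hk⟩
      refine ⟨e, fun a b => ?_⟩
      have : G' (e a) (e b) ↔ G a b := by
        rw [hG']
        simp only [Equiv.symm_apply_apply]
      rw [← this]
      exact hrel (e a) (e b)
    · rintro ⟨e', he'⟩
      have hGeq : G = fun a b => Knkm n (n-2) 1 (e' a) (e' b) := by
        funext a b
        exact propext (he' a b)
      rw [hGeq]
      show specRad (Aalpha α (fun a b => Knkm n (n-2) 1 (e' a) (e' b)))
        = specRad (Aalpha α (Knkm n (n-2) 1))
      rw [Aalpha_relabel α _ e', specRad_submatrix]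
end
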